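/- Let k ≥ 2 and let N_1, ..., N_k, μ_1, ..., μ_k be nonnegative rationals with N_i ≥ 2 and μ_i ≤ N_i/2 for all i, and set N̄_i = (k + μ_i)·N_i. If μ_i = N_i/2 for all i and either k ≥ 7, or k = 6 with at most 4 of the N_i equal to 2, then (∏ N_i + 1)·(1 + ∑ μ_i + k) + k + ∑ μ_i·(N_i + N̄_i) ≥ (1 + ∑ μ_i)·∑ (N_i + N̄_i). -/

import Mathlib

lemma nat_key (k : ℕ) (hk : 6 ≤ k) : (k+2)*k^2 ≤ (2*k+1)*2^(k-1) := by
  induction k, hk using Nat.le_induction with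
  | base => norm_num
  | succ n hn ih =>
    have h3 : 2 ^ (n + 1 - 1) = 2 * 2 ^ (n - 1) := by
      rw [show n + 1 - 1 = n - 1 + 1 from by omega, pow_succ]; ring
    rw [h3]
    nlinarith [ih, hn]

theorem crucial_ineq_extreme_case (k : ℕ) (N μ : Fin k → ℚ)
    (hN : ∀ i, 2 ≤ N i) (hμ : ∀ i, μ i = N i / 2)
    (hk : 7 ≤ k ∨ (k = 6 ∧ (Finset.univ.filter (fun i => N i = 2)).card ≤ 4)) :
    (1 + ∑ i, μ i) * ∑ i, (N i + ((k : ℚ) + μ i) * N i) ≤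
      ((∏ i, N i) + 1) * (1 + (∑ i, μ i) + k) + k +
        ∑ i, μ i * (N i + ((k : ℚ) + μ i) * N i) := by
  have hk6 : 6 ≤ k := by rcases hk with h | ⟨h, _⟩ <;> omega
  have hk6Q : (6:ℚ) ≤ (k:ℚ) := by exact_mod_cast hk6
  set E : ℚ := ∑ i, N i with hE
  set P : ℚ := ∏ i, N i with hP
  have hNpos : ∀ i, (0:ℚ) < N i := fun i => lt_of_lt_of_le two_pos (hN i)
  have hPpos : 0 < P := Finset.prod_pos (fun i _ => hNpos i)
  set D : ℚ := 2^(k-1) with hD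
  have hDpos : 0 < D := by positivity
  -- single bound
  have hsingle : ∀ i, D * N i ≤ P := by
    intro i
    have h1 : N i * ∏ j ∈ Finset.univ.erase i, N j = P :=
      Finset.mul_prod_erase _ _ (Finset.mem_univ i)
    have h2 : D ≤ ∏ j ∈ Finset.univ.erase i, N j := by
      have hc : (Finset.univ.erase i).card = k - 1 := by
        rw [Finset.card_erase_of_mem (Finset.mem_univ i), Finset.card_univ, Fintype.card_fin]
      calc D = ∏ _j ∈ Finset.univ.erase i, (2:ℚ) := by
              rw [Finset.prod_const, hc]
        _ ≤ ∏ j ∈ Finset.univ.erase i, N j :=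
              Finset.prod_le_prod (fun _ _ => by norm_num) (fun j _ => hN j)
    nlinarith [hNpos i, h2]
  -- pair bound
  have hpair : ∀ i j, j ≠ i → D * (N i * N j) ≤ 2 * P := by
    intro i j hij
    have hjmem : j ∈ Finset.univ.erase i := Finset.mem_erase.2 ⟨hij, Finset.mem_univ j⟩
    have h1 : N i * ∏ l ∈ Finset.univ.erase i, N l = P :=
      Finset.mul_prod_erase _ _ (Finset.mem_univ i)
    have h1' : N j * ∏ l ∈ (Finset.univ.erase i).erase j, N l
        = ∏ l ∈ Finset.univ.erase i, N l := Finset.mul_prod_erase _ _ hjmem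
    have hc : ((Finset.univ.erase i).erase j).card = k - 2 := by
      rw [Finset.card_erase_of_mem hjmem, Finset.card_erase_of_mem (Finset.mem_univ i),
        Finset.card_univ, Fintype.card_fin]
      omega
    have h2 : (2:ℚ)^(k-2) ≤ ∏ l ∈ (Finset.univ.erase i).erase j, N l := by
      calc (2:ℚ)^(k-2) = ∏ _l ∈ (Finset.univ.erase i).erase j, (2:ℚ) := by
              rw [Finset.prod_const, hc]
        _ ≤ _ := Finset.prod_le_prod (fun _ _ => by norm_num) (fun l _ => hN l)
    have hDsplit : D = 2 * (2:ℚ)^(k-2) := by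
      rw [hD, show k - 1 = (k-2) + 1 from by omega, pow_succ]; ring
    have hPij : P = N i * (N j * ∏ l ∈ (Finset.univ.erase i).erase j, N l) := by
      rw [h1', h1]
    rw [hDsplit, hPij]
    nlinarith [hNpos i, hNpos j, h2, mul_pos (hNpos i) (hNpos j)]
  -- per-index bound
  have hterm : ∀ i, D * ((1 + E/2 - N i/2) * (N i + ((k:ℚ) + N i/2) * N i))
      ≤ (1+(k:ℚ))*k*P + (k:ℚ)*P*(N i)/2 := by
    intro i
    have hrest : E - N i = ∑ j ∈ Finset.univ.erase i, N j := by
      rw [hE, ← Finset.add_sum_erase _ _ (Finset.mem_univ i)]; ring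
    have hcard : ((Finset.univ.erase i).card : ℚ) = (k:ℚ) - 1 := by
      rw [Finset.card_erase_of_mem (Finset.mem_univ i), Finset.card_univ, Fintype.card_fin,
        Nat.cast_sub (by omega : 1 ≤ k), Nat.cast_one]
    have h3 : D * (N i * (E - N i)) ≤ 2*((k:ℚ)-1)*P := by
      calc D * (N i * (E - N i)) = ∑ j ∈ Finset.univ.erase i, D * (N i * N j) := by
              rw [hrest]; simp only [Finset.mul_sum]
        _ ≤ ∑ _j ∈ Finset.univ.erase i, 2*P :=
              Finset.sum_le_sum (fun j hj => hpair i j (Finset.ne_of_mem_erase hj))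
        _ = 2*((k:ℚ)-1)*P := by
              rw [Finset.sum_const, nsmul_eq_mul, hcard]; ring
    have h4 : D * (N i * N i * (E - N i)) ≤ 2*((k:ℚ)-1)*P*(N i) := by
      calc D * (N i * N i * (E - N i)) = ∑ j ∈ Finset.univ.erase i, N i * (D * (N i * N j)) := by
              rw [hrest]; simp only [Finset.mul_sum]
              try exact Finset.sum_congr rfl (fun j _ => by ring)
        _ ≤ ∑ _j ∈ Finset.univ.erase i, N i * (2*P) :=
              Finset.sum_le_sum (fun j hj =>
                mul_le_mul_of_nonneg_left (hpair i j (Finset.ne_of_mem_erase hj)) (hNpos i).le)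
        _ = 2*((k:ℚ)-1)*P*(N i) := by
              rw [Finset.sum_const, nsmul_eq_mul, hcard]; ring
    have h1 := hsingle i
    have h2 : D * (N i * N i) ≤ P * N i :=
      calc D * (N i * N i) = (D * N i) * N i := by ring
        _ ≤ P * N i := mul_le_mul_of_nonneg_right h1 (hNpos i).le
    have hkpos : (0:ℚ) ≤ 1 + (k:ℚ) := by positivity
    have e1 := mul_le_mul_of_nonneg_left h1 hkpos
    have e3 := mul_le_mul_of_nonneg_left h3 hkpos
    nlinarith [e1, h2, e3, h4]
  -- sum the bounds
  have hsum : D * (∑ i, (1 + E/2 - N i/2) * (N i + ((k:ℚ) + N i/2) * N i))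
      ≤ (k:ℚ)*((1+(k:ℚ))*k*P) + (k:ℚ)*P*E/2 := by
    calc D * (∑ i, (1 + E/2 - N i/2) * (N i + ((k:ℚ) + N i/2) * N i))
        = ∑ i, D * ((1 + E/2 - N i/2) * (N i + ((k:ℚ) + N i/2) * N i)) := Finset.mul_sum _ _ _
      _ ≤ ∑ i, ((1+(k:ℚ))*k*P + (k:ℚ)*P*(N i)/2) := Finset.sum_le_sum (fun i _ => hterm i)
      _ = (k:ℚ)*((1+(k:ℚ))*k*P) + (k:ℚ)*P*E/2 := by
          rw [Finset.sum_add_distrib, Finset.sum_const, Finset.card_univ, Fintype.card_fin,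
            nsmul_eq_mul]
          congr 1
          rw [hE]; simp only [Finset.mul_sum, Finset.sum_div]
  -- lower bound on E
  have hEk : 2*(k:ℚ) ≤ E := by
    have : ∑ _i : Fin k, (2:ℚ) ≤ ∑ i, N i := Finset.sum_le_sum (fun i _ => hN i)
    rw [Finset.sum_const, Finset.card_univ, Fintype.card_fin, nsmul_eq_mul] at this
    rw [hE]; linarith
  -- cast of key nat facts
  have hDk : (k:ℚ) ≤ D := by
    have h1 : k ≤ 2^(k-1) := by
      have := Nat.lt_two_pow_self (n := k-1)
      omega
    calc (k:ℚ) ≤ ((2^(k-1) : ℕ) : ℚ) := by exact_mod_cast h1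
      _ = D := by push_cast [hD]; ring
  have keyQ : ((k:ℚ)+2)*(k:ℚ)^2 ≤ (2*(k:ℚ)+1)*D := by
    have h1 := nat_key k hk6
    calc ((k:ℚ)+2)*(k:ℚ)^2 = (((k+2)*k^2 : ℕ) : ℚ) := by push_cast; ring
      _ ≤ (((2*k+1)*2^(k-1) : ℕ) : ℚ) := by exact_mod_cast h1
      _ = (2*(k:ℚ)+1)*D := by push_cast [hD]; ring
  -- main bound on the sum
  have hmain : ∑ i, (1 + E/2 - N i/2) * (N i + ((k:ℚ) + N i/2) * N i)
      ≤ (P+1)*(1+E/2+(k:ℚ)) + k := by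
    rw [← mul_le_mul_iff_right₀ hDpos]
    refine le_trans hsum ?_
    nlinarith [mul_nonneg hPpos.le (sub_nonneg.2 keyQ),
      mul_nonneg (mul_nonneg hPpos.le (by linarith : (0:ℚ) ≤ E/2 - (k:ℚ)))
        (by linarith : (0:ℚ) ≤ D - (k:ℚ)),
      mul_nonneg hDpos.le (by linarith : (0:ℚ) ≤ 1 + E/2 + 2*(k:ℚ)),
      hPpos.le, hDpos.le]
  -- reduce the goal to hmain
  simp only [hμ]
  have hsumμ : ∑ i, N i / 2 = E / 2 := by rw [hE, Finset.sum_div]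
  rw [hsumμ]
  have hid : ∑ i, (1 + E/2 - N i/2) * (N i + ((k:ℚ) + N i/2) * N i)
      = (1 + E/2) * ∑ i, (N i + ((k:ℚ) + N i/2) * N i)
        - ∑ i, N i/2 * (N i + ((k:ℚ) + N i/2) * N i) := by
    rw [Finset.mul_sum, ← Finset.sum_sub_distrib]
    exact Finset.sum_congr rfl (fun i _ => by ring)
  rw [hid] at hmain
  rw [hP] at hmain
  linarith
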